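/- Let K be a field of characteristic 0 and let K((s)) be the field of formal Laurent series. The image of the logarithmic derivative map u ↦ s·u'/u on K((s))^× is exactly ℤ + s·K[[s]], i.e.: (1) for every unit u ∈ K((s))^×, s·u'/u = n + s·f(s) for some integer n (the order of u) and some f ∈ K[[s]]; and (2) conversely, for every n ∈ ℤ and f ∈ K[[s]] there exists u ∈ K((s))^× with s·u'/u = n + s·f(s). -/

import Mathlib

open LaurentSeries

/-- The formal derivative of a Laurent series: `(∑ aₙ sⁿ)' = ∑ (n+1)·aₙ₊₁ sⁿ`. -/
noncomputable def lsDeriv (K : Type*) [Field K] (u : LaurentSeries K) : LaurentSeries K where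
  coeff := fun n => (n + 1 : ℤ) • u.coeff (n + 1)
  isPWO_support' := by
    have hsub : Function.support (fun n : ℤ => ((n + 1 : ℤ) • u.coeff (n + 1) : K)) ⊆
        (fun m : ℤ => m - 1) '' Function.support u.coeff := by
      intro n hn
      have h1 : u.coeff (n + 1) ≠ 0 := by
        intro h
        exact hn (by simp [Function.mem_support, h])
      exact ⟨n + 1, h1, by ring⟩
    exact ((u.isPWO_support').image_of_monotone
      (f := fun m : ℤ => m - 1) (fun a b hab => by simpa using hab)).mono hsub

section LogDerivAux

variable {K : Type*} [Field K]

theorem lsDeriv_coeff (u : LaurentSeries K) (m : ℤ) :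
    (lsDeriv K u).coeff m = (m + 1 : ℤ) • u.coeff (m + 1) := rfl

/-- The operator `u ↦ s·u'` multiplies the `k`-th coefficient by `k`. -/
theorem theta_coeff (u : LaurentSeries K) (k : ℤ) :
    (HahnSeries.single (1 : ℤ) (1 : K) * lsDeriv K u).coeff k = k • u.coeff k := by
  have h : k = (k - 1) + 1 := by ring
  rw [h, HahnSeries.coeff_single_mul_add, one_mul, lsDeriv_coeff]

theorem ofPowerSeries_coeff_neg (v : PowerSeries K) {k : ℤ} (hk : k < 0) :
    (HahnSeries.ofPowerSeries ℤ K v).coeff k = 0 := by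
  rw [HahnSeries.ofPowerSeries_apply, HahnSeries.embDomain_notin_range]
  simp only [Set.mem_range, RelEmbedding.coe_mk, Function.Embedding.coeFn_mk]
  rintro ⟨m, hm⟩
  have : ((Nat.castOrderEmbedding m : ℤ)) = (m : ℤ) := rfl
  omega

/-- Master lemma: if `v` is a power-series solution of `s·v' = s·f·v` (coefficientwise),
then `u = sⁿ·v` satisfies `s·u' = (n + s·f)·u`. -/
theorem key_lemma (n : ℤ) (f v : PowerSeries K)
    (h : ∀ m : ℕ, ((m : K) + 1) * PowerSeries.coeff (m + 1) v =
      PowerSeries.coeff m (f * v)) :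
    HahnSeries.single (1 : ℤ) (1 : K) *
        lsDeriv K (HahnSeries.single n (1 : K) * HahnSeries.ofPowerSeries ℤ K v) =
      ((n : LaurentSeries K) +
          HahnSeries.single (1 : ℤ) (1 : K) * HahnSeries.ofPowerSeries ℤ K f) *
        (HahnSeries.single n (1 : K) * HahnSeries.ofPowerSeries ℤ K v) := by
  have hn : (n : LaurentSeries K) = HahnSeries.single (0 : ℤ) (n : K) := by
    rw [← HahnSeries.C_apply, ← map_intCast (HahnSeries.C (Γ := ℤ) (R := K)) n]
  have hrhs : ((n : LaurentSeries K) +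
      HahnSeries.single (1 : ℤ) (1 : K) * HahnSeries.ofPowerSeries ℤ K f) *
        (HahnSeries.single n (1 : K) * HahnSeries.ofPowerSeries ℤ K v) =
      HahnSeries.single n ((n : K)) * HahnSeries.ofPowerSeries ℤ K v +
      HahnSeries.single (n + 1) (1 : K) * HahnSeries.ofPowerSeries ℤ K (f * v) := by
    rw [hn, add_mul, map_mul]
    rw [show HahnSeries.single (0 : ℤ) (n : K) *
        (HahnSeries.single n (1 : K) * HahnSeries.ofPowerSeries ℤ K v) =
        (HahnSeries.single (0 : ℤ) (n : K) * HahnSeries.single n (1 : K)) *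
          HahnSeries.ofPowerSeries ℤ K v by ring]
    rw [show HahnSeries.single (1 : ℤ) (1 : K) * HahnSeries.ofPowerSeries ℤ K f *
        (HahnSeries.single n (1 : K) * HahnSeries.ofPowerSeries ℤ K v) =
        (HahnSeries.single (1 : ℤ) (1 : K) * HahnSeries.single n (1 : K)) *
          (HahnSeries.ofPowerSeries ℤ K f * HahnSeries.ofPowerSeries ℤ K v) by ring]
    rw [HahnSeries.single_mul_single, HahnSeries.single_mul_single]
    norm_num [add_comm]
  rw [hrhs]
  ext k
  rw [theta_coeff, HahnSeries.coeff_add]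
  have e1 : (HahnSeries.single n (1 : K) * HahnSeries.ofPowerSeries ℤ K v).coeff k =
      (HahnSeries.ofPowerSeries ℤ K v).coeff (k - n) := by
    rw [show k = (k - n) + n by ring, HahnSeries.coeff_single_mul_add, one_mul]
    ring_nf
  have e2 : (HahnSeries.single n ((n : K)) * HahnSeries.ofPowerSeries ℤ K v).coeff k =
      (n : K) * (HahnSeries.ofPowerSeries ℤ K v).coeff (k - n) := by
    rw [show k = (k - n) + n by ring, HahnSeries.coeff_single_mul_add]
    ring_nf
  have e3 : (HahnSeries.single (n + 1) (1 : K) *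
      HahnSeries.ofPowerSeries ℤ K (f * v)).coeff k =
      (HahnSeries.ofPowerSeries ℤ K (f * v)).coeff (k - n - 1) := by
    rw [show k = (k - n - 1) + (n + 1) by ring, HahnSeries.coeff_single_mul_add, one_mul]
    ring_nf
  rw [e1, e2, e3]
  -- now goal: k • V.coeff (k-n) = n * V.coeff (k-n) + W.coeff (k-n-1)
  rcases lt_trichotomy (k - n) 0 with hm | hm | hm
  · rw [ofPowerSeries_coeff_neg v hm, ofPowerSeries_coeff_neg (f * v) (by omega)]
    simp
  · rw [hm, ofPowerSeries_coeff_neg (f * v) (by omega)]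
    have hkn : k = n := by omega
    subst hkn
    simp [hm]
  · obtain ⟨m, hm'⟩ : ∃ m : ℕ, k - n = (m : ℤ) + 1 := by
      refine ⟨(k - n - 1).toNat, by omega⟩
    obtain rfl : k = n + (m : ℤ) + 1 := by omega
    rw [show (n + (m : ℤ) + 1) - n - 1 = ((m : ℕ) : ℤ) by push_cast; ring]
    rw [show (n + (m : ℤ) + 1) - n = ((m + 1 : ℕ) : ℤ) by push_cast; ring]
    rw [HahnSeries.ofPowerSeries_apply_coeff, HahnSeries.ofPowerSeries_apply_coeff, ← h m,
      zsmul_eq_mul]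
    push_cast
    ring

/-- The coefficients of the power-series solution of `v' = f·v`, `v(0) = 1`. -/
noncomputable def solFun (f : PowerSeries K) : ℕ → K
  | 0 => 1
  | (m + 1) => ((m : K) + 1)⁻¹ *
      ∑ j ∈ Finset.range (m + 1), (PowerSeries.coeff j f) * solFun f (m - j)
  decreasing_by exact Nat.lt_succ_of_le (Nat.sub_le m j)

theorem sol_spec [CharZero K] (f : PowerSeries K) (m : ℕ) :
    ((m : K) + 1) * PowerSeries.coeff (m + 1) (PowerSeries.mk (solFun f)) =
      PowerSeries.coeff m (f * PowerSeries.mk (solFun f)) := by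
  rw [PowerSeries.coeff_mk, solFun, ← mul_assoc,
    mul_inv_cancel₀ (by exact_mod_cast Nat.cast_add_one_ne_zero (R := K) m), one_mul,
    PowerSeries.coeff_mul, Finset.Nat.sum_antidiagonal_eq_sum_range_succ_mk]
  simp [PowerSeries.coeff_mk]

end LogDerivAux

/-- Over a field `K` of characteristic zero, the image of the logarithmic
derivative `u ↦ s·u'/u` on `K((s))ˣ` is exactly `ℤ + s·K[[s]]`: (1) for every nonzero Laurent
series `u` there are `n : ℤ` and `f ∈ K[[s]]` with `s·u' = (n + s·f)·u`; (2) conversely every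
`n + s·f` arises this way. -/
theorem log_derivative_image (K : Type*) [Field K] [CharZero K] :
    (∀ u : LaurentSeries K, u ≠ 0 → ∃ (n : ℤ) (f : PowerSeries K),
        HahnSeries.single (1 : ℤ) (1 : K) * lsDeriv K u =
          ((n : LaurentSeries K) +
              HahnSeries.single (1 : ℤ) (1 : K) * HahnSeries.ofPowerSeries ℤ K f) * u) ∧
      (∀ (n : ℤ) (f : PowerSeries K), ∃ u : LaurentSeries K, u ≠ 0 ∧
        HahnSeries.single (1 : ℤ) (1 : K) * lsDeriv K u =
          ((n : LaurentSeries K) +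
              HahnSeries.single (1 : ℤ) (1 : K) * HahnSeries.ofPowerSeries ℤ K f) * u) := by
  constructor
  · intro u hu
    set v : PowerSeries K := u.powerSeriesPart with hv
    have hc : PowerSeries.constantCoeff v ≠ 0 := by
      have := HahnSeries.coeff_order_eq_zero.not.2 hu
      simpa [hv, ← PowerSeries.coeff_zero_eq_constantCoeff] using this
    set dv : PowerSeries K :=
      PowerSeries.mk (fun m => ((m : K) + 1) * PowerSeries.coeff (m + 1) v) with hdv
    refine ⟨u.order, dv * v⁻¹, ?_⟩
    have hfv : dv * v⁻¹ * v = dv := by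
      rw [mul_assoc, PowerSeries.inv_mul_cancel v hc, mul_one]
    have hkey := key_lemma u.order (dv * v⁻¹) v
      (fun m => by rw [hfv, hdv, PowerSeries.coeff_mk])
    rwa [LaurentSeries.single_order_mul_powerSeriesPart] at hkey
  · intro n f
    set v : PowerSeries K := PowerSeries.mk (solFun f) with hv
    have hvne : v ≠ 0 := by
      intro h
      have : (PowerSeries.coeff 0) v = 0 := by rw [h]; simp
      rw [hv, PowerSeries.coeff_mk] at this
      simp [solFun] at this
    refine ⟨HahnSeries.single n (1 : K) * HahnSeries.ofPowerSeries ℤ K v, ?_, ?_⟩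
    · exact mul_ne_zero (HahnSeries.single_ne_zero one_ne_zero)
        (fun h => hvne (HahnSeries.ofPowerSeries_injective (Γ := ℤ)
          (by rw [h, map_zero])))
    · exact key_lemma n f v (sol_spec f)
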